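/- Let c(x) = Σ_{n≥0} C_n x^n be the generating function of the Catalan numbers C_n = (1/(n+1))·binom(2n,n), a formal power series over ℚ (invertible since its constant term is 1), and let L_n(x,s) be the bivariate Lucas polynomials (L_0 = 2, L_1 = x, L_n = x·L_{n-1} + s·L_{n-2}). Then for every positive integer k, (x·c(x))^k + c(x)^{-k} = L_k(1, -x), the polynomial L_k evaluated at (1, -x) viewed as a formal power series. -/

import Mathlib

/-- The bivariate Lucas polynomials: `L₀(x,s) = 2`, `L₁(x,s) = x`,
`Lₙ(x,s) = x·Lₙ₋₁(x,s) + s·Lₙ₋₂(x,s)`, here with values in any commutative ring. -/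
def lucas {R : Type*} [CommRing R] : ℕ → R → R → R
  | 0, _, _ => 2
  | 1, x, _ => x
  | n + 2, x, s => x * lucas (n + 1) x s + s * lucas n x s

lemma lucas_pow_add_pow {R : Type*} [CommRing R] (a b : R) :
    ∀ k : ℕ, a ^ k + b ^ k = lucas k (a + b) (-(a * b))
  | 0 => by norm_num [lucas]
  | 1 => by simp [lucas]
  | n + 2 => by
    rw [lucas, ← lucas_pow_add_pow a b (n + 1), ← lucas_pow_add_pow a b n]
    ring

/-- For the Catalan generating function `c`, `(x·c(x))^k + c(x)^{-k} = L_k(1, -x)`. -/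
theorem stmt4 (c : PowerSeries ℚ)
    (hc : ∀ n : ℕ, PowerSeries.coeff n c = (1 / (n + 1 : ℚ)) * ((2 * n).choose n))
    (k : ℕ) (hk : 0 < k) :
    (PowerSeries.X * c) ^ k + c⁻¹ ^ k = lucas k (1 : PowerSeries ℚ) (-PowerSeries.X) := by
  have hcat : ∀ n : ℕ, PowerSeries.coeff n c = (catalan n : ℚ) := by
    intro n
    rw [hc n, catalan_eq_centralBinom_div]
    have hd := Nat.succ_dvd_centralBinom n
    rw [Nat.cast_div hd (by positivity), Nat.centralBinom]
    push_cast
    ring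
  have h0 : PowerSeries.constantCoeff c ≠ 0 := by
    rw [← PowerSeries.coeff_zero_eq_constantCoeff, hcat 0]; norm_num
  have h1 : PowerSeries.constantCoeff c = 1 := by
    rw [← PowerSeries.coeff_zero_eq_constantCoeff, hcat 0]; norm_num
  have key : c * (1 - PowerSeries.X * c) = 1 := by
    have : PowerSeries.X * (c * c) = c - 1 := by
      ext n
      cases n with
      | zero => simp [PowerSeries.coeff_zero_eq_constantCoeff, map_mul, h1]
      | succ n =>
        rw [PowerSeries.coeff_succ_X_mul, PowerSeries.coeff_mul]
        simp only [map_sub, hcat, PowerSeries.coeff_one, Nat.succ_ne_zero, if_false, sub_zero]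
        rw [catalan_succ']
        push_cast
        rfl
    calc c * (1 - PowerSeries.X * c) = c - PowerSeries.X * (c * c) := by ring
    _ = 1 := by rw [this]; ring
  have hinv : c⁻¹ = 1 - PowerSeries.X * c := by
    rw [PowerSeries.inv_eq_iff_mul_eq_one h0, mul_comm, key]
  have hsum : PowerSeries.X * c + c⁻¹ = 1 := by rw [hinv]; ring
  have hprod : -(PowerSeries.X * c * c⁻¹) = -PowerSeries.X := by
    rw [hinv]
    have : PowerSeries.X * c * (1 - PowerSeries.X * c) =
        PowerSeries.X * (c * (1 - PowerSeries.X * c)) := by ring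
    rw [this, key, mul_one]
  rw [lucas_pow_add_pow, hsum, hprod]
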